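/- Let ε > 0 and let υ : [0,1] → ℝ be continuously differentiable. Then sup_{x ∈ [0,1]} υ(x)² ≤ ((1 + ε)/ε) · ∫₀¹ (ε²·υ'(x)² + υ(x)²) dx. -/

import Mathlib

open Set

theorem stmt_4 (ε : ℝ) (hε : 0 < ε) (υ : ℝ → ℝ) (hυ : ContDiff ℝ 1 υ) :
    ∀ x ∈ Icc (0:ℝ) 1,
      (υ x) ^ 2 ≤ (1 + ε) / ε *
        ∫ y in (0:ℝ)..1, (ε ^ 2 * (deriv υ y) ^ 2 + (υ y) ^ 2) := by
  intro x hx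
  have hcu : Continuous υ := hυ.continuous
  have hd : Differentiable ℝ υ := hυ.differentiable one_ne_zero
  have hcd : Continuous (deriv υ) := hυ.continuous_deriv le_rfl
  set f : ℝ → ℝ := fun t => 2 * υ t * deriv υ t with hf
  have hcf : Continuous f := by continuity
  have hcfa : Continuous fun t => |f t| := hcf.abs
  have hcg : Continuous fun t => (υ t) ^ 2 := by continuity
  have hcB : Continuous fun t => ε ^ 2 * (deriv υ t) ^ 2 + (υ t) ^ 2 := by continuity
  set B : ℝ := ∫ y in (0:ℝ)..1, (ε ^ 2 * (deriv υ y) ^ 2 + (υ y) ^ 2) with hB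
  set C : ℝ := ∫ t in (0:ℝ)..1, |f t| with hC
  -- FTC
  have ftc : ∀ a b : ℝ, (υ b) ^ 2 - (υ a) ^ 2 = ∫ t in a..b, f t := by
    intro a b
    rw [intervalIntegral.integral_eq_sub_of_hasDerivAt
      (f := fun t => (υ t) ^ 2) (f' := f)
      (fun t _ => by
        have := ((hd t).hasDerivAt).fun_pow 2
        simpa [hf, mul_comm, mul_assoc, mul_left_comm] using this)
      (hcf.intervalIntegrable a b)]
  -- step 2 : for a b in Icc, ∫ a..b f ≤ C
  have step2 : ∀ a ∈ Icc (0:ℝ) 1, ∀ b ∈ Icc (0:ℝ) 1, (∫ t in a..b, f t) ≤ C := by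
    intro a ha b hb
    rcases le_total a b with hab | hab
    · calc (∫ t in a..b, f t) ≤ ∫ t in a..b, |f t| := by
            apply intervalIntegral.integral_mono_on hab
              (hcf.intervalIntegrable a b) (hcfa.intervalIntegrable a b)
            intro t _; exact le_abs_self _
        _ ≤ C := by
            apply intervalIntegral.integral_mono_interval ha.1 hab hb.2
              (Filter.Eventually.of_forall fun t => abs_nonneg _)
              (hcfa.intervalIntegrable 0 1)
    · have : (∫ t in a..b, f t) = - ∫ t in b..a, f t := by
        rw [intervalIntegral.integral_symm]
      rw [this]
      calc - (∫ t in b..a, f t) = ∫ t in b..a, -f t := by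
            rw [intervalIntegral.integral_neg]
        _ ≤ ∫ t in b..a, |f t| := by
            apply intervalIntegral.integral_mono_on hab
              (hcf.neg.intervalIntegrable b a) (hcfa.intervalIntegrable b a)
            intro t _; exact neg_le_abs _
        _ ≤ C := by
            apply intervalIntegral.integral_mono_interval hb.1 hab ha.2
              (Filter.Eventually.of_forall fun t => abs_nonneg _)
              (hcfa.intervalIntegrable 0 1)
  -- step 3 : υ x ^ 2 ≤ ∫ υ² + C
  have key : ∀ y ∈ Icc (0:ℝ) 1, (υ x) ^ 2 ≤ (υ y) ^ 2 + C := by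
    intro y hy
    have h1 := ftc y x
    have h2 := step2 y hy x hx
    linarith
  have step3 : (υ x) ^ 2 ≤ (∫ y in (0:ℝ)..1, (υ y) ^ 2) + C := by
    have hmono : (∫ y in (0:ℝ)..1, (υ x) ^ 2) ≤ ∫ y in (0:ℝ)..1, ((υ y) ^ 2 + C) := by
      apply intervalIntegral.integral_mono_on zero_le_one
        (intervalIntegrable_const) ((hcg.add continuous_const).intervalIntegrable 0 1)
      intro y hy; exact key y hy
    have h1 : (∫ y in (0:ℝ)..1, (υ x) ^ 2) = (υ x) ^ 2 := by simp
    have h2 : (∫ y in (0:ℝ)..1, ((υ y) ^ 2 + C)) = (∫ y in (0:ℝ)..1, (υ y) ^ 2) + C := by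
      rw [intervalIntegral.integral_add (hcg.intervalIntegrable 0 1) intervalIntegrable_const]
      simp
    rw [h1, h2] at hmono; exact hmono
  -- step 4 : C ≤ (1/ε) * B
  have step4 : C ≤ (1/ε) * B := by
    have hpt : ∀ t ∈ Icc (0:ℝ) 1,
        |f t| ≤ (1/ε) * (ε ^ 2 * (deriv υ t) ^ 2 + (υ t) ^ 2) := by
      intro t _
      have h1 : |f t| * ε ≤ ε ^ 2 * (deriv υ t) ^ 2 + (υ t) ^ 2 := by
        rcases abs_cases (f t) with ⟨h, _⟩ | ⟨h, _⟩ <;> rw [h] <;> simp only [hf] <;>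
          nlinarith [sq_nonneg (ε * deriv υ t - υ t), sq_nonneg (ε * deriv υ t + υ t)]
      rw [one_div, inv_mul_eq_div, le_div_iff₀ hε]
      exact h1
    calc C ≤ ∫ t in (0:ℝ)..1, (1/ε) * (ε ^ 2 * (deriv υ t) ^ 2 + (υ t) ^ 2) := by
          apply intervalIntegral.integral_mono_on zero_le_one
            (hcfa.intervalIntegrable 0 1) ((continuous_const.mul hcB).intervalIntegrable 0 1)
          exact hpt
      _ = (1/ε) * B := by rw [intervalIntegral.integral_const_mul]
  -- step 5 : ∫ υ² ≤ B
  have step5 : (∫ y in (0:ℝ)..1, (υ y) ^ 2) ≤ B := by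
    apply intervalIntegral.integral_mono_on zero_le_one
      (hcg.intervalIntegrable 0 1) (hcB.intervalIntegrable 0 1)
    intro y _; nlinarith [sq_nonneg (ε * deriv υ y)]
  have hBval : (1 + ε) / ε * B = (1/ε) * B + B := by field_simp
  rw [hBval]
  linarith
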